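/- Let n ≥ 2 and 1 ≤ N ≤ n(n−1)/2, and let m : (0,∞)×(0,∞) → ℝ satisfy 0 < m(x,y) < (x+y)/2 whenever x ≠ y (x,y > 0). Then there exist pairwise distinct λ_1,…,λ_n > 0 with Σ_k λ_k = 1, ρ := diag(λ_1,…,λ_n), and Hermitian n×n complex matrices A_1,…,A_N such that Tr(ρ·(A_h A_j − A_j A_h)) = 0 for all h,j (so the Robertson matrix {−(i/2)Tr(ρ[A_h,A_j])} is the zero matrix and its determinant is 0) while det G(m) > 0. In other words, the inequality det{(f(0)/2)⟨i[ρ,A_h],i[ρ,A_j]⟩_{ρ,f}} ≤ det{−(i/2)Tr(ρ[A_h,A_j])} is in general false. -/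

import Mathlib

open Matrix

lemma fa_sum_range_add_one (n : ℕ) : ∑ i ∈ Finset.range n, ((i : ℝ) + 1) = n * (n + 1) / 2 := by
  induction n with
  | zero => simp
  | succ k ih => rw [Finset.sum_range_succ, ih]; push_cast; ring

lemma fa_trace_diag_mul {n : ℕ} (d : Fin n → ℂ) (M : Matrix (Fin n) (Fin n) ℂ) :
    Matrix.trace (Matrix.diagonal d * M) = ∑ a, d a * M a a := by
  simp [Matrix.trace, Matrix.diag, Matrix.mul_apply, Matrix.diagonal_apply, ite_mul,
    Finset.sum_ite_eq]

lemma fa_trace_diag_mul_std {n : ℕ} (d : Fin n → ℂ) (i j : Fin n) (c : ℂ) :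
    Matrix.trace (Matrix.diagonal d * Matrix.single i j c) =
      if i = j then d i * c else 0 := by
  rw [fa_trace_diag_mul]
  rw [Finset.sum_eq_single i]
  · by_cases h : i = j
    · subst h; simp [Matrix.single]
    · have h' : ¬ j = i := fun hh => h hh.symm
      simp [Matrix.single, h, h']
  · intro b _ hb
    simp [Matrix.single, (Ne.symm hb)]
  · simp

lemma fa_trace_diag_std_mul_std {n : ℕ} (d : Fin n → ℂ) (a b c e : Fin n) :
    Matrix.trace (Matrix.diagonal d *
      (Matrix.single a b (1:ℂ) * Matrix.single c e 1)) =
      if b = c ∧ a = e then d a else 0 := by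
  by_cases h : b = c
  · subst h
    rw [Matrix.single_mul_single_same, fa_trace_diag_mul_std]
    simp
  · rw [Matrix.single_mul_single_of_ne (h := h), Matrix.mul_zero, Matrix.trace_zero]
    simp [h]

lemma fa_trace_diag_comm_zero {n : ℕ} (d : Fin n → ℂ) (M P : Matrix (Fin n) (Fin n) ℂ)
    (hM : Mᵀ = M) (hP : Pᵀ = P) :
    Matrix.trace (Matrix.diagonal d * (M * P - P * M)) = 0 := by
  have h1 : Matrix.trace (Matrix.diagonal d * (M * P)) =
      Matrix.trace (Matrix.diagonal d * (P * M)) := by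
    conv_lhs => rw [← Matrix.trace_transpose, Matrix.transpose_mul, Matrix.transpose_mul,
      hM, hP, Matrix.diagonal_transpose]
    rw [Matrix.trace_mul_comm]
  rw [Matrix.mul_sub, Matrix.trace_sub, h1, sub_self]

lemma fa_sum_sum_ite {n : ℕ} (f : Fin n → Fin n → ℝ) (a b : Fin n) :
    ∑ k, ∑ l, f k l * (if a = k ∧ b = l then (1:ℝ) else 0) = f a b := by
  simp [ite_and, mul_ite, Finset.sum_ite_eq]

lemma fa_std_transpose {n : ℕ} (i j : Fin n) :
    (Matrix.single i j (1:ℂ))ᵀ = Matrix.single j i 1 := by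
  ext a b
  simp [Matrix.single, Matrix.transpose_apply, and_comm]

lemma fa_std_conjTranspose {n : ℕ} (i j : Fin n) :
    (Matrix.single i j (1:ℂ))ᴴ = Matrix.single j i 1 := by
  ext a b
  simp [Matrix.single, Matrix.conjTranspose_apply, and_comm, apply_ite (starRingEnd ℂ)]

theorem fisher_det_le_robertson_det_false
    (n N : ℕ) (hn : 2 ≤ n) (hN : 1 ≤ N) (hNn : N ≤ n * (n - 1) / 2)
    (m : ℝ → ℝ → ℝ)
    (hm : ∀ x y : ℝ, 0 < x → 0 < y → x ≠ y → 0 < m x y ∧ m x y < (x + y) / 2) :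
    ∃ lam : Fin n → ℝ, Function.Injective lam ∧ (∀ k, 0 < lam k) ∧ (∑ k, lam k = 1) ∧
    ∃ A : Fin N → Matrix (Fin n) (Fin n) ℂ, (∀ h, (A h).IsHermitian) ∧
    ∃ ρ : Matrix (Fin n) (Fin n) ℂ, ρ = Matrix.diagonal (fun k => (lam k : ℂ)) ∧
      (∀ h j, Matrix.trace (ρ * (A h * A j - A j * A h)) = 0) ∧
    ∃ A₀ : Fin N → Matrix (Fin n) (Fin n) ℂ,
      (∀ h, A₀ h = A h - (Matrix.trace (ρ * A h)) • (1 : Matrix (Fin n) (Fin n) ℂ)) ∧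
    ∃ G : Matrix (Fin N) (Fin N) ℝ,
      (∀ h j, G h j = (Matrix.trace (ρ * A₀ h * A₀ j)).re -
        ∑ k, ∑ l, m (lam k) (lam l) * (A₀ h k l * (starRingEnd ℂ) (A₀ j k l)).re) ∧
      0 < G.det := by
  -- choose N distinct (ordered) pairs lo h < hi h
  have hsig : Fintype.card (Σ i : Fin n, Fin (i : ℕ)) = n * (n - 1) / 2 := by
    rw [Fintype.card_sigma]
    simp only [Fintype.card_fin]
    rw [Fin.sum_univ_eq_sum_range (fun i => i), Finset.sum_range_id]
  have hcard : Fintype.card (Fin N) ≤ Fintype.card (Σ i : Fin n, Fin (i : ℕ)) := by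
    rw [Fintype.card_fin, hsig]; exact hNn
  obtain ⟨emb⟩ := Function.Embedding.nonempty_of_card_le hcard
  set lo : Fin N → Fin n := fun h => ⟨((emb h).2 : ℕ), lt_trans (emb h).2.isLt (emb h).1.isLt⟩
    with hlo_def
  set hi : Fin N → Fin n := fun h => (emb h).1 with hhi_def
  have hlt : ∀ h, (lo h : ℕ) < (hi h : ℕ) := fun h => (emb h).2.isLt
  have hne : ∀ h, lo h ≠ hi h := by
    intro h e
    have := hlt h
    rw [e] at this
    exact lt_irrefl _ this
  have vinj : Function.Injective
      (fun s : Σ i : Fin n, Fin (i : ℕ) => ((s.1 : ℕ), (s.2 : ℕ))) := by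
    rintro ⟨⟨a, ha⟩, ⟨b, hb⟩⟩ ⟨⟨c, hc⟩, ⟨d, hd⟩⟩ hh
    simp only [Prod.mk.injEq] at hh
    obtain ⟨h1, h2⟩ := hh
    subst h1
    subst h2
    rfl
  have hpairinj : ∀ h j : Fin N, lo h = lo j → hi h = hi j → h = j := by
    intro h j h1 h2
    apply emb.injective
    apply vinj
    have e1 : ((emb h).1 : ℕ) = ((emb j).1 : ℕ) := congrArg Fin.val h2
    have e2 : ((emb h).2 : ℕ) = ((emb j).2 : ℕ) := congrArg Fin.val h1
    exact Prod.ext e1 e2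
  -- the state
  have hnR : (0:ℝ) < (n:ℝ) := by exact_mod_cast Nat.lt_of_lt_of_le Nat.zero_lt_two hn
  have hden : (0:ℝ) < (n:ℝ) * ((n:ℝ) + 1) := by positivity
  set c : ℝ := 2 / ((n:ℝ) * ((n:ℝ) + 1)) with hc_def
  have hcpos : 0 < c := by positivity
  set lam : Fin n → ℝ := fun k => (((k:ℕ):ℝ) + 1) * c with hlam_def
  have hlam_pos : ∀ k, 0 < lam k := by
    intro k
    apply mul_pos _ hcpos
    positivity
  have hlam_inj : Function.Injective lam := by
    intro a b hab
    have h1 : (((a:ℕ):ℝ) + 1) = (((b:ℕ):ℝ) + 1) := mul_right_cancel₀ (ne_of_gt hcpos) hab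
    have h2 : ((a:ℕ):ℝ) = ((b:ℕ):ℝ) := by linarith
    have h3 : (a:ℕ) = (b:ℕ) := by exact_mod_cast h2
    exact Fin.ext h3
  have hlam_sum : ∑ k, lam k = 1 := by
    have hs : ∑ k : Fin n, (((k:ℕ):ℝ) + 1) = (n:ℝ) * ((n:ℝ) + 1) / 2 := by
      rw [Fin.sum_univ_eq_sum_range (fun i : ℕ => ((i:ℝ) + 1))]
      exact fa_sum_range_add_one n
    rw [hlam_def]
    rw [← Finset.sum_mul, hs, hc_def]
    field_simp
  -- the matrices
  set A : Fin N → Matrix (Fin n) (Fin n) ℂ := fun h =>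
    Matrix.single (lo h) (hi h) (1:ℂ) + Matrix.single (hi h) (lo h) 1
    with hA_def
  have hherm : ∀ h, (A h).IsHermitian := by
    intro h
    show (A h)ᴴ = A h
    rw [hA_def]
    simp only [Matrix.conjTranspose_add, fa_std_conjTranspose]
    rw [add_comm]
  have hAT : ∀ h, (A h)ᵀ = A h := by
    intro h
    rw [hA_def]
    simp only [Matrix.transpose_add, fa_std_transpose]
    rw [add_comm]
  set dC : Fin n → ℂ := fun k => ((lam k : ℝ) : ℂ) with hdC_def
  -- trace of ρ A h is zero
  have htr0 : ∀ h, Matrix.trace (Matrix.diagonal dC * A h) = 0 := by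
    intro h
    rw [hA_def]
    simp only
    rw [Matrix.mul_add, Matrix.trace_add, fa_trace_diag_mul_std, fa_trace_diag_mul_std,
      if_neg (hne h), if_neg (Ne.symm (hne h)), add_zero]
  -- trace of products
  have htrprod : ∀ h j, Matrix.trace (Matrix.diagonal dC * (A h * A j)) =
      if h = j then dC (lo h) + dC (hi h) else 0 := by
    intro h j
    have expand : A h * A j =
        Matrix.single (lo h) (hi h) (1:ℂ) * Matrix.single (lo j) (hi j) 1
        + Matrix.single (lo h) (hi h) 1 * Matrix.single (hi j) (lo j) 1
        + Matrix.single (hi h) (lo h) 1 * Matrix.single (lo j) (hi j) 1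
        + Matrix.single (hi h) (lo h) 1 * Matrix.single (hi j) (lo j) 1 := by
      rw [hA_def]
      simp only
      rw [add_mul, mul_add, mul_add, ← add_assoc]
    rw [expand, Matrix.mul_add, Matrix.mul_add, Matrix.mul_add,
      Matrix.trace_add, Matrix.trace_add, Matrix.trace_add,
      fa_trace_diag_std_mul_std, fa_trace_diag_std_mul_std,
      fa_trace_diag_std_mul_std, fa_trace_diag_std_mul_std]
    by_cases hhj : h = j
    · subst hhj
      rw [if_pos rfl]
      rw [if_neg (fun hc => (hne h) hc.2), if_pos ⟨rfl, rfl⟩, if_pos ⟨rfl, rfl⟩,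
        if_neg (fun hc => (hne h) hc.1)]
      ring
    · rw [if_neg hhj]
      have c1 : ¬ (hi h = lo j ∧ lo h = hi j) := by
        rintro ⟨e1, e2⟩
        have v1 : (hi h : ℕ) = (lo j : ℕ) := congrArg Fin.val e1
        have v2 : (lo h : ℕ) = (hi j : ℕ) := congrArg Fin.val e2
        have := hlt h
        have := hlt j
        omega
      have c2 : ¬ (hi h = hi j ∧ lo h = lo j) := by
        rintro ⟨e1, e2⟩
        exact hhj (hpairinj h j e2 e1)
      have c3 : ¬ (lo h = lo j ∧ hi h = hi j) := by
        rintro ⟨e1, e2⟩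
        exact hhj (hpairinj h j e1 e2)
      have c4 : ¬ (lo h = hi j ∧ hi h = lo j) := by
        rintro ⟨e1, e2⟩
        have v1 : (lo h : ℕ) = (hi j : ℕ) := congrArg Fin.val e1
        have v2 : (hi h : ℕ) = (lo j : ℕ) := congrArg Fin.val e2
        have := hlt h
        have := hlt j
        omega
      rw [if_neg c1, if_neg c2, if_neg c3, if_neg c4]
      ring
  -- entries of A
  have hAentry : ∀ h k l, A h k l =
      (((if (lo h = k ∧ hi h = l) ∨ (hi h = k ∧ lo h = l) then (1:ℝ) else 0) : ℝ) : ℂ) := by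
    intro h k l
    rw [hA_def]
    simp only [Matrix.add_apply, Matrix.single, Matrix.of_apply]
    by_cases p : lo h = k ∧ hi h = l
    · obtain ⟨p1, p2⟩ := p
      subst p1
      subst p2
      simp [hne h, Ne.symm (hne h)]
    · by_cases q : hi h = k ∧ lo h = l
      · obtain ⟨q1, q2⟩ := q
        subst q1
        subst q2
        simp [hne h, Ne.symm (hne h)]
      · simp [p, q]
  -- the entrywise sums
  have hsum : ∀ h j, (∑ k, ∑ l, m (lam k) (lam l) * (A h k l * (starRingEnd ℂ) (A j k l)).re)
      = if h = j then m (lam (lo h)) (lam (hi h)) + m (lam (hi h)) (lam (lo h)) else 0 := by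
    intro h j
    have hpt : ∀ k l, (A h k l * (starRingEnd ℂ) (A j k l)).re =
        (if (lo h = k ∧ hi h = l) ∨ (hi h = k ∧ lo h = l) then (1:ℝ) else 0) *
        (if (lo j = k ∧ hi j = l) ∨ (hi j = k ∧ lo j = l) then (1:ℝ) else 0) := by
      intro k l
      rw [hAentry h k l, hAentry j k l, Complex.conj_ofReal, ← Complex.ofReal_mul,
        Complex.ofReal_re]
    by_cases hhj : h = j
    · subst hhj
      rw [if_pos rfl]
      have hsplit : ∀ k l, (A h k l * (starRingEnd ℂ) (A h k l)).re =
          (if lo h = k ∧ hi h = l then (1:ℝ) else 0) +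
          (if hi h = k ∧ lo h = l then (1:ℝ) else 0) := by
        intro k l
        rw [hpt k l]
        by_cases p : lo h = k ∧ hi h = l
        · obtain ⟨p1, p2⟩ := p
          subst p1
          subst p2
          simp [hne h, Ne.symm (hne h)]
        · by_cases q : hi h = k ∧ lo h = l
          · obtain ⟨q1, q2⟩ := q
            subst q1
            subst q2
            simp [hne h, Ne.symm (hne h)]
          · simp [p, q]
      calc (∑ k, ∑ l, m (lam k) (lam l) * (A h k l * (starRingEnd ℂ) (A h k l)).re)
          = ∑ k, ∑ l, (m (lam k) (lam l) * (if lo h = k ∧ hi h = l then (1:ℝ) else 0)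
            + m (lam k) (lam l) * (if hi h = k ∧ lo h = l then (1:ℝ) else 0)) := by
            apply Finset.sum_congr rfl
            intro k _
            apply Finset.sum_congr rfl
            intro l _
            rw [hsplit k l, mul_add]
        _ = (∑ k, ∑ l, m (lam k) (lam l) * (if lo h = k ∧ hi h = l then (1:ℝ) else 0))
            + ∑ k, ∑ l, m (lam k) (lam l) * (if hi h = k ∧ lo h = l then (1:ℝ) else 0) := by
            rw [← Finset.sum_add_distrib]
            apply Finset.sum_congr rfl
            intro k _
            rw [← Finset.sum_add_distrib]
        _ = m (lam (lo h)) (lam (hi h)) + m (lam (hi h)) (lam (lo h)) := by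
            rw [fa_sum_sum_ite (fun k l => m (lam k) (lam l)) (lo h) (hi h),
              fa_sum_sum_ite (fun k l => m (lam k) (lam l)) (hi h) (lo h)]
    · rw [if_neg hhj]
      apply Finset.sum_eq_zero
      intro k _
      apply Finset.sum_eq_zero
      intro l _
      rw [hpt k l]
      have hz : ¬ ((lo h = k ∧ hi h = l) ∨ (hi h = k ∧ lo h = l)) ∨
          ¬ ((lo j = k ∧ hi j = l) ∨ (hi j = k ∧ lo j = l)) := by
        by_contra hcon
        push_neg at hcon
        obtain ⟨p, q⟩ := hcon
        rcases p with ⟨p1, p2⟩ | ⟨p1, p2⟩ <;> rcases q with ⟨q1, q2⟩ | ⟨q1, q2⟩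
        · exact hhj (hpairinj h j (p1.trans q1.symm) (p2.trans q2.symm))
        · have v1 : (lo h : ℕ) = (hi j : ℕ) := congrArg Fin.val (p1.trans q1.symm)
          have v2 : (hi h : ℕ) = (lo j : ℕ) := congrArg Fin.val (p2.trans q2.symm)
          have := hlt h
          have := hlt j
          omega
        · have v1 : (hi h : ℕ) = (lo j : ℕ) := congrArg Fin.val (p1.trans q1.symm)
          have v2 : (lo h : ℕ) = (hi j : ℕ) := congrArg Fin.val (p2.trans q2.symm)
          have := hlt h
          have := hlt j
          omega
        · exact hhj (hpairinj h j (p2.trans q2.symm) (p1.trans q1.symm))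
      rcases hz with hz | hz
      · rw [if_neg hz, zero_mul, mul_zero]
      · rw [if_neg hz, mul_zero, mul_zero]
  -- assemble
  refine ⟨lam, hlam_inj, hlam_pos, hlam_sum, A, hherm,
    Matrix.diagonal dC, rfl, ?_, A, ?_, ?_⟩
  · intro h j
    exact fa_trace_diag_comm_zero dC (A h) (A j) (hAT h) (hAT j)
  · intro h
    rw [htr0 h, zero_smul, sub_zero]
  · refine ⟨Matrix.diagonal (fun h => lam (lo h) + lam (hi h)
      - m (lam (lo h)) (lam (hi h)) - m (lam (hi h)) (lam (lo h))), ?_, ?_⟩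
    · intro h j
      rw [Matrix.mul_assoc, htrprod h j, hsum h j, Matrix.diagonal_apply]
      by_cases hhj : h = j
      · subst hhj
        rw [if_pos rfl, if_pos rfl, if_pos rfl, hdC_def]
        simp only [Complex.add_re, Complex.ofReal_re]
        ring
      · rw [if_neg hhj, if_neg hhj, if_neg hhj, Complex.zero_re, sub_zero]
    · rw [Matrix.det_diagonal]
      apply Finset.prod_pos
      intro h _
      have ha := hlam_pos (lo h)
      have hb := hlam_pos (hi h)
      have hne' : lam (lo h) ≠ lam (hi h) := fun e => hne h (hlam_inj e)
      obtain ⟨-, h1⟩ := hm (lam (lo h)) (lam (hi h)) ha hb hne'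
      obtain ⟨-, h2⟩ := hm (lam (hi h)) (lam (lo h)) hb ha (Ne.symm hne')
      linarith
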